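/- Let x be a quasispecies solution for the sharp peak fitness function on E = 𝒜^ℓ with mean fitness λ, and for 0 ≤ k ≤ ℓ let 𝒬(k) = Σ_{u : d(u,w*) = k} x(u). Then 𝒬(k) is given by the finite algebraic formula 𝒬(k) = (λ−1) · C(ℓ,k) · ((κ−1)^k / κ^ℓ) · Σ_{i=0}^{k} Σ_{j=0}^{ℓ−k} C(k,i) C(ℓ−k,j) · (−1)^i (κ−1)^j ρ^{i+j} / (λ − ρ^{i+j}). -/

import Mathlib

open scoped BigOperators

/-- Exact finite algebraic formula for the quasispecies distribution on Hamming
classes: `𝒬(k) = (λ-1) C(ℓ,k) ((κ-1)^k/κ^ℓ) ∑_{i=0}^{k} ∑_{j=0}^{ℓ-k}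
C(k,i) C(ℓ-k,j) (-1)^i (κ-1)^j ρ^{i+j}/(λ-ρ^{i+j})`. -/
theorem quasispecies_hamming_class_algebraic
    (A : Type*) [Fintype A] [DecidableEq A] (κ ℓ : ℕ)
    (hκ : Fintype.card A = κ) (hκ2 : 2 ≤ κ) (hℓ : 1 ≤ ℓ)
    (q : ℝ) (hq0 : 0 < q) (hq1 : q < ((κ : ℝ) - 1) / κ)
    (ρ : ℝ) (hρ : ρ = 1 - κ * q / ((κ : ℝ) - 1))
    (σ : ℝ) (hσ : 1 < σ) (wstar : Fin ℓ → A)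
    (f : (Fin ℓ → A) → ℝ) (hf : ∀ u, f u = if u = wstar then σ else 1)
    (M : Matrix (Fin ℓ → A) (Fin ℓ → A) ℝ)
    (hM : ∀ u v, M u v =
      (q / ((κ : ℝ) - 1)) ^ hammingDist u v * (1 - q) ^ (ℓ - hammingDist u v))
    (x : (Fin ℓ → A) → ℝ) (hx0 : ∀ u, 0 ≤ x u) (hx1 : ∑ u, x u = 1)
    (hqs : ∀ u, x u * (∑ v, x v * f v) = ∑ v, x v * f v * M v u)
    (lam : ℝ) (hlam : lam = ∑ v, x v * f v)
    (k : ℕ) (hk : k ≤ ℓ) :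
    (∑ u ∈ Finset.univ.filter (fun u => hammingDist u wstar = k), x u) =
      (lam - 1) * (Nat.choose ℓ k : ℝ) * (((κ : ℝ) - 1) ^ k / (κ : ℝ) ^ ℓ) *
        ∑ i ∈ Finset.range (k + 1), ∑ j ∈ Finset.range (ℓ - k + 1),
          (Nat.choose k i : ℝ) * (Nat.choose (ℓ - k) j : ℝ) *
            ((-1 : ℝ) ^ i * ((κ : ℝ) - 1) ^ j * ρ ^ (i + j) / (lam - ρ ^ (i + j))) := by
  classical
  have hκR : (2:ℝ) ≤ (κ:ℝ) := by exact_mod_cast hκ2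
  have hκ1 : (0:ℝ) < (κ:ℝ) - 1 := by linarith
  have hκ1' : ((κ:ℝ) - 1) ≠ 0 := ne_of_gt hκ1
  have hκ0 : (0:ℝ) < (κ:ℝ) := by linarith
  have hq1' : q < 1 := lt_of_lt_of_le hq1 (by rw [div_le_one hκ0]; linarith)
  have hρ0 : 0 < ρ := by
    rw [hρ]
    have h1 : q * κ < (κ:ℝ) - 1 := (lt_div_iff₀ hκ0).1 hq1
    have h2 : (κ:ℝ) * q / ((κ:ℝ)-1) < 1 := by
      rw [div_lt_one hκ1]; linarith
    linarith
  have hρ1 : ρ < 1 := by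
    rw [hρ]
    have : 0 < (κ:ℝ) * q / ((κ:ℝ)-1) := by positivity
    linarith
  set g : Fin ℓ → A → ℝ := fun i a => if a = wstar i then 1 else -1/((κ:ℝ)-1) with hg
  have hgsum : ∀ i : Fin ℓ, ∑ a, g i a = 0 := by
    intro i
    have h1 : ∀ a : A, g i a = -1/((κ:ℝ)-1) + (if a = wstar i then 1 + 1/((κ:ℝ)-1) else 0) := by
      intro a; simp only [hg]; split_ifs <;> ring
    rw [Finset.sum_congr rfl (fun a _ => h1 a), Finset.sum_add_distrib, Finset.sum_const,
      Finset.sum_ite_eq' Finset.univ (wstar i) (fun _ => 1 + 1/((κ:ℝ)-1))]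
    rw [Finset.card_univ, hκ, if_pos (Finset.mem_univ _), nsmul_eq_mul]
    field_simp
    ring
  set m : A → A → ℝ := fun a b => if b = a then 1 - q else q/((κ:ℝ)-1) with hm
  have hmρ : 1 - q = q/((κ:ℝ)-1) + ρ := by rw [hρ]; field_simp; ring
  have hmact : ∀ (a : A) (h : A → ℝ), ∑ b, m a b * h b = q/((κ:ℝ)-1) * (∑ b, h b) + ρ * h a := by
    intro a h
    have h1 : ∀ b, m a b * h b = q/((κ:ℝ)-1) * h b + (if b = a then ρ * h b else 0) := by
      intro b; simp only [hm]; split_ifs with hb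
      · subst hb; rw [hmρ]; ring
      · ring
    rw [Finset.sum_congr rfl (fun b _ => h1 b), Finset.sum_add_distrib, ← Finset.mul_sum,
      Finset.sum_ite_eq' Finset.univ a (fun b => ρ * h b), if_pos (Finset.mem_univ _)]
  have hMprod : ∀ v u : Fin ℓ → A, M v u = ∏ i, m (v i) (u i) := by
    intro v u
    have hcard : (Finset.univ.filter (fun i => v i ≠ u i)).card = hammingDist v u := rfl
    have hc2 : (Finset.univ.filter (fun i => ¬ v i ≠ u i)).card = ℓ - hammingDist v u := by
      have h3 := Finset.card_filter_add_card_filter_not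
        (s := (Finset.univ : Finset (Fin ℓ))) (p := fun i => v i ≠ u i)
      rw [Finset.card_univ, Fintype.card_fin] at h3
      omega
    rw [hM, ← Finset.prod_filter_mul_prod_filter_not Finset.univ (fun i => v i ≠ u i)
      (fun i => m (v i) (u i))]
    have e1 : ∀ i ∈ Finset.univ.filter (fun i => v i ≠ u i), m (v i) (u i) = q/((κ:ℝ)-1) := by
      intro i hi; simp only [Finset.mem_filter] at hi
      simp only [hm]; rw [if_neg (fun h => hi.2 h.symm)]
    have e2 : ∀ i ∈ Finset.univ.filter (fun i => ¬ v i ≠ u i), m (v i) (u i) = 1 - q := by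
      intro i hi; simp only [Finset.mem_filter, not_not] at hi
      simp only [hm]; rw [if_pos hi.2.symm]
    rw [Finset.prod_congr rfl e1, Finset.prod_congr rfl e2, Finset.prod_const, Finset.prod_const,
      hcard, hc2]
  set χ : Finset (Fin ℓ) → (Fin ℓ → A) → ℝ := fun S u => ∏ i ∈ S, g i (u i) with hχ
  have hχw : ∀ S, χ S wstar = 1 := fun S => Finset.prod_eq_one (fun i _ => by simp [hg])
  have heigen : ∀ (S : Finset (Fin ℓ)) (v : Fin ℓ → A),
      ∑ u, M v u * χ S u = ρ ^ S.card * χ S v := by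
    intro S v
    have e0 : ∀ u : Fin ℓ → A, M v u * χ S u
        = ∏ i, (m (v i) (u i) * (if i ∈ S then g i (u i) else 1)) := by
      intro u
      rw [Finset.prod_mul_distrib, ← hMprod v u, hχ]
      congr 1
      rw [Finset.prod_ite_mem Finset.univ S (fun i => g i (u i)), Finset.univ_inter]
    have e1 : ∀ i : Fin ℓ, (∑ b, m (v i) b * (if i ∈ S then g i b else 1))
        = if i ∈ S then ρ * g i (v i) else 1 := by
      intro i
      by_cases hi : i ∈ S
      · simp only [hi, if_true]
        rw [hmact (v i) (g i), hgsum i]; ring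
      · simp only [hi, if_false]
        have h4 := hmact (v i) (fun _ => (1:ℝ))
        simp only [mul_one] at h4 ⊢
        rw [h4, Finset.sum_const, Finset.card_univ, hκ, nsmul_eq_mul, mul_one, hρ]
        field_simp
        ring
    calc ∑ u, M v u * χ S u
        = ∑ u : Fin ℓ → A, ∏ i, (m (v i) (u i) * (if i ∈ S then g i (u i) else 1)) :=
          Finset.sum_congr rfl (fun u _ => e0 u)
      _ = ∏ i, ∑ b, (m (v i) b * (if i ∈ S then g i b else 1)) :=
          (Fintype.prod_sum (fun (i : Fin ℓ) (b : A) => m (v i) b * (if i ∈ S then g i b else 1))).symm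
      _ = ∏ i, (if i ∈ S then ρ * g i (v i) else 1) := Finset.prod_congr rfl (fun i _ => e1 i)
      _ = ρ ^ S.card * χ S v := by
          rw [Finset.prod_ite_mem Finset.univ S (fun i => ρ * g i (v i)), Finset.univ_inter,
            Finset.prod_mul_distrib, Finset.prod_const, hχ]
  have hgdef : ∀ i a, g i a = if a = wstar i then 1 else -1/((κ:ℝ)-1) := fun i a => rfl
  have hχdef : ∀ S u, χ S u = ∏ i ∈ S, g i (u i) := fun S u => rfl
  have hκ0' : ((κ:ℝ)) ≠ 0 := ne_of_gt hκ0
  have hMpos : ∀ v u, 0 < M v u := by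
    intro v u
    rw [hMprod]
    apply Finset.prod_pos
    intro i _
    simp only [hm]
    split_ifs
    · linarith
    · positivity
  have hfv : ∀ v, x v * f v = x v + (if v = wstar then (σ - 1) * x v else 0) := by
    intro v; rw [hf]; split_ifs <;> ring
  have hlam1 : lam = 1 + (σ - 1) * x wstar := by
    rw [hlam, Finset.sum_congr rfl (fun v _ => hfv v), Finset.sum_add_distrib, hx1,
      Finset.sum_ite_eq' Finset.univ wstar (fun v => (σ-1) * x v), if_pos (Finset.mem_univ _)]
  have hfpos : ∀ v, 0 < f v := by intro v; rw [hf]; split_ifs <;> linarith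
  have hxw : 0 < x wstar := by
    rcases (hx0 wstar).eq_or_lt with h0 | h
    · exfalso
      have h1 := (hqs wstar).symm
      rw [← h0, zero_mul] at h1
      have hall := (Finset.sum_eq_zero_iff_of_nonneg (fun v _ => by
        have := hx0 v; have := (hfpos v).le; have := (hMpos v wstar).le; positivity)).1 h1
      have hz : ∀ v : Fin ℓ → A, x v = 0 := by
        intro v
        have h2 := hall v (Finset.mem_univ v)
        have h3 : 0 < f v * M v wstar := mul_pos (hfpos v) (hMpos v wstar)
        rw [mul_assoc] at h2
        exact (mul_eq_zero.1 h2).resolve_right (ne_of_gt h3)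
      rw [Finset.sum_congr rfl (fun v _ => hz v), Finset.sum_const, smul_zero] at hx1
      exact one_ne_zero hx1.symm
    · exact h
  have hlamgt : 1 < lam := by rw [hlam1]; nlinarith
  have hlamρ : ∀ s : ℕ, 0 < lam - ρ ^ s := by
    intro s
    have : ρ ^ s ≤ 1 := pow_le_one₀ hρ0.le hρ1.le
    linarith
  have hY : ∀ S : Finset (Fin ℓ),
      (∑ u, x u * χ S u) = (lam - 1) * ρ ^ S.card / (lam - ρ ^ S.card) := by
    intro S
    have key : lam * (∑ u, x u * χ S u) = ρ ^ S.card * ((∑ u, x u * χ S u) + (lam - 1)) := by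
      have e1 : lam * (∑ u, x u * χ S u) = ∑ u, (x u * lam) * χ S u := by
        rw [Finset.mul_sum]; exact Finset.sum_congr rfl (fun u _ => by ring)
      have e2 : ∀ u, (x u * lam) * χ S u = (∑ v, x v * f v * M v u) * χ S u := by
        intro u; rw [hlam, hqs u]
      have e3 : ∑ u, (∑ v, x v * f v * M v u) * χ S u
          = ∑ v, (x v * f v) * (∑ u, M v u * χ S u) := by
        simp_rw [Finset.sum_mul, Finset.mul_sum]
        rw [Finset.sum_comm]
        exact Finset.sum_congr rfl fun v _ => Finset.sum_congr rfl fun u _ => by ring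
      have e4 : ∑ v, (x v * f v) * (ρ ^ S.card * χ S v)
          = ρ ^ S.card * ∑ v, (x v * f v) * χ S v := by
        rw [Finset.mul_sum]; exact Finset.sum_congr rfl fun v _ => by ring
      have e5 : ∀ v, (x v * f v) * χ S v
          = x v * χ S v + (if v = wstar then (σ-1) * x v * χ S v else 0) := by
        intro v; rw [hf]; split_ifs <;> ring
      rw [e1, Finset.sum_congr rfl (fun u _ => e2 u), e3,
        Finset.sum_congr rfl (fun v _ => by rw [heigen S v]), e4]
      congr 1
      rw [Finset.sum_congr rfl (fun v _ => e5 v), Finset.sum_add_distrib,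
        Finset.sum_ite_eq' Finset.univ wstar (fun v => (σ-1) * x v * χ S v),
        if_pos (Finset.mem_univ _), hχw, hlam1]
      ring
    have hne : lam - ρ ^ S.card ≠ 0 := ne_of_gt (hlamρ S.card)
    rw [eq_div_iff hne]
    linear_combination key
  set Dis : (Fin ℓ → A) → Finset (Fin ℓ) :=
    fun u => Finset.univ.filter (fun i => u i ≠ wstar i) with hDis
  have hdis : ∀ u, hammingDist u wstar = (Dis u).card := fun u => rfl
  set P : Finset (Fin ℓ) → (Fin ℓ → A) → ℝ :=
    fun D u => (∏ i ∈ D, (1 - g i (u i))) * ∏ i ∈ Dᶜ, (1 + ((κ:ℝ)-1) * g i (u i)) with hP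
  have hP1 : ∀ D u, P D u
      = if D = Dis u then ((κ:ℝ)/((κ:ℝ)-1))^D.card * (κ:ℝ)^(ℓ - D.card) else 0 := by
    intro D u
    by_cases hDu : D = Dis u
    · rw [if_pos hDu]
      simp only [hP]
      have p1 : ∀ i ∈ D, (1 - g i (u i)) = (κ:ℝ)/((κ:ℝ)-1) := by
        intro i hi
        rw [hDu, hDis, Finset.mem_filter] at hi
        rw [hgdef, if_neg hi.2]
        field_simp
        ring
      have p2 : ∀ i ∈ Dᶜ, (1 + ((κ:ℝ)-1) * g i (u i)) = (κ:ℝ) := by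
        intro i hi
        rw [Finset.mem_compl, hDu, hDis, Finset.mem_filter] at hi
        have : u i = wstar i := by
          by_contra hne
          exact hi ⟨Finset.mem_univ i, hne⟩
        rw [hgdef, if_pos this]
        ring
      rw [Finset.prod_congr rfl p1, Finset.prod_congr rfl p2, Finset.prod_const,
        Finset.prod_const, Finset.card_compl, Fintype.card_fin]
    · rw [if_neg hDu]
      simp only [hP]
      have hne : ¬ (∀ i, i ∈ D ↔ i ∈ Dis u) := fun h => hDu (Finset.ext h)
      push_neg at hne
      obtain ⟨i, hi⟩ := hne
      rcases hi with ⟨hiD, hiDis⟩ | ⟨hiD, hiDis⟩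
      · have hui : u i = wstar i := by
          by_contra hcon
          exact hiDis (by rw [hDis]; exact Finset.mem_filter.2 ⟨Finset.mem_univ i, hcon⟩)
        apply mul_eq_zero_of_left
        apply Finset.prod_eq_zero hiD
        rw [hgdef, if_pos hui]; ring
      · have hui : u i ≠ wstar i := by
          rw [hDis, Finset.mem_filter] at hiDis; exact hiDis.2
        apply mul_eq_zero_of_right
        apply Finset.prod_eq_zero (Finset.mem_compl.2 hiD)
        rw [hgdef, if_neg hui]
        field_simp
        ring
  have hPsum : ∀ u, (∑ D ∈ Finset.powersetCard k Finset.univ, P D u)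
      = if hammingDist u wstar = k then ((κ:ℝ)/((κ:ℝ)-1))^k * (κ:ℝ)^(ℓ-k) else 0 := by
    intro u
    rw [Finset.sum_congr rfl (fun D _ => hP1 D u),
      Finset.sum_ite_eq' (Finset.powersetCard k Finset.univ) (Dis u)
        (fun D => ((κ:ℝ)/((κ:ℝ)-1))^D.card * (κ:ℝ)^(ℓ - D.card))]
    by_cases h : hammingDist u wstar = k
    · have hc : (Dis u).card = k := (hdis u).symm.trans h
      rw [if_pos h, if_pos (Finset.mem_powersetCard_univ.2 hc), hc]
    · rw [if_neg h, if_neg (fun hmem => h ((hdis u).trans (Finset.mem_powersetCard_univ.1 hmem)))]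
  have hP2 : ∀ D u, P D u = ∑ T ∈ D.powerset, ∑ U ∈ Dᶜ.powerset,
      (-1:ℝ)^T.card * ((κ:ℝ)-1)^U.card * χ (T ∪ U) u := by
    intro D u
    have q1 : (∏ i ∈ D, (1 - g i (u i)))
        = ∑ T ∈ D.powerset, (-1:ℝ)^T.card * ∏ i ∈ T, g i (u i) := by
      have e : ∀ i ∈ D, (1 - g i (u i)) = (-(g i (u i))) + 1 := fun i _ => by ring
      rw [Finset.prod_congr rfl e, Finset.prod_add]
      refine Finset.sum_congr rfl (fun T hT => ?_)
      rw [Finset.prod_const_one, mul_one]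
      rw [show (∏ i ∈ T, (-(g i (u i)))) = ∏ i ∈ T, ((-1:ℝ) * g i (u i)) from
        Finset.prod_congr rfl (fun i _ => by ring), Finset.prod_mul_distrib,
        Finset.prod_const]
    have q2 : (∏ i ∈ Dᶜ, (1 + ((κ:ℝ)-1) * g i (u i)))
        = ∑ U ∈ Dᶜ.powerset, ((κ:ℝ)-1)^U.card * ∏ i ∈ U, g i (u i) := by
      have e : ∀ i ∈ Dᶜ, (1 + ((κ:ℝ)-1) * g i (u i)) = (((κ:ℝ)-1) * g i (u i)) + 1 :=
        fun i _ => by ring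
      rw [Finset.prod_congr rfl e, Finset.prod_add]
      refine Finset.sum_congr rfl (fun U hU => ?_)
      rw [Finset.prod_const_one, mul_one, Finset.prod_mul_distrib, Finset.prod_const]
    simp only [hP]
    rw [q1, q2, Finset.sum_mul_sum]
    refine Finset.sum_congr rfl (fun T hT => Finset.sum_congr rfl (fun U hU => ?_))
    have hdisj : Disjoint T U := by
      rw [Finset.disjoint_left]
      intro a haT haU
      exact (Finset.mem_compl.1 ((Finset.mem_powerset.1 hU) haU)) ((Finset.mem_powerset.1 hT) haT)
    rw [hχdef, Finset.prod_union hdisj]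
    ring
  have hsub : ∀ (s : Finset (Fin ℓ)) (G : ℕ → ℝ), (∑ T ∈ s.powerset, G T.card)
      = ∑ i ∈ Finset.range (s.card + 1), (s.card.choose i : ℝ) * G i := by
    intro s G
    rw [Finset.sum_powerset_apply_card]
    exact Finset.sum_congr rfl fun i _ => by rw [nsmul_eq_mul]
  -- step2
  have step2 : ∀ D : Finset (Fin ℓ), (∑ u, x u * P D u)
      = ∑ T ∈ D.powerset, ∑ U ∈ Dᶜ.powerset,
          (-1:ℝ)^T.card * ((κ:ℝ)-1)^U.card * (∑ u, x u * χ (T ∪ U) u) := by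
    intro D
    rw [Finset.sum_congr rfl (fun u (_ : u ∈ Finset.univ) => by rw [hP2 D u])]
    simp_rw [Finset.mul_sum]
    rw [Finset.sum_comm]
    refine Finset.sum_congr rfl fun T _ => ?_
    rw [Finset.sum_comm]
    refine Finset.sum_congr rfl fun U _ => ?_
    exact Finset.sum_congr rfl fun u _ => by ring
  have step3 : ∀ D ∈ Finset.powersetCard k Finset.univ,
      (∑ T ∈ D.powerset, ∑ U ∈ Dᶜ.powerset,
          (-1:ℝ)^T.card * ((κ:ℝ)-1)^U.card * (∑ u, x u * χ (T ∪ U) u))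
      = ∑ i ∈ Finset.range (k+1), ∑ j ∈ Finset.range (ℓ-k+1),
          (k.choose i : ℝ) * ((ℓ-k).choose j : ℝ) *
            ((-1:ℝ)^i * ((κ:ℝ)-1)^j * ((lam - 1) * ρ^(i+j) / (lam - ρ^(i+j)))) := by
    intro D hD
    have hDcard : D.card = k := Finset.mem_powersetCard_univ.1 hD
    have hDc : Dᶜ.card = ℓ - k := by rw [Finset.card_compl, Fintype.card_fin, hDcard]
    have hform : ∀ T ∈ D.powerset, ∀ U ∈ Dᶜ.powerset,
        (∑ u, x u * χ (T ∪ U) u)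
          = (lam - 1) * ρ^(T.card + U.card) / (lam - ρ^(T.card + U.card)) := by
      intro T hT U hU
      have hdisj : Disjoint T U := by
        rw [Finset.disjoint_left]
        intro a haT haU
        exact (Finset.mem_compl.1 ((Finset.mem_powerset.1 hU) haU))
          ((Finset.mem_powerset.1 hT) haT)
      rw [hY (T ∪ U), Finset.card_union_of_disjoint hdisj]
    rw [Finset.sum_congr rfl (fun T hT => Finset.sum_congr rfl (fun U hU => by
      rw [hform T hT U hU]))]
    calc (∑ T ∈ D.powerset, ∑ U ∈ Dᶜ.powerset, (-1:ℝ)^T.card * ((κ:ℝ)-1)^U.card *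
            ((lam - 1) * ρ^(T.card + U.card) / (lam - ρ^(T.card + U.card))))
        = ∑ T ∈ D.powerset, ∑ j ∈ Finset.range (ℓ-k+1), ((ℓ-k).choose j : ℝ) *
            ((-1:ℝ)^T.card * ((κ:ℝ)-1)^j * ((lam - 1) * ρ^(T.card+j) / (lam - ρ^(T.card+j)))) := by
          refine Finset.sum_congr rfl fun T _ => ?_
          have h5 := hsub Dᶜ (fun j => (-1:ℝ)^T.card * ((κ:ℝ)-1)^j *
            ((lam - 1) * ρ^(T.card+j) / (lam - ρ^(T.card+j))))
          rw [hDc] at h5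
          exact h5
      _ = ∑ i ∈ Finset.range (k+1), (k.choose i : ℝ) *
            ∑ j ∈ Finset.range (ℓ-k+1), ((ℓ-k).choose j : ℝ) *
            ((-1:ℝ)^i * ((κ:ℝ)-1)^j * ((lam - 1) * ρ^(i+j) / (lam - ρ^(i+j)))) := by
          have h6 := hsub D (fun i => ∑ j ∈ Finset.range (ℓ-k+1), ((ℓ-k).choose j : ℝ) *
            ((-1:ℝ)^i * ((κ:ℝ)-1)^j * ((lam - 1) * ρ^(i+j) / (lam - ρ^(i+j)))))
          rw [hDcard] at h6
          exact h6
      _ = _ := by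
          refine Finset.sum_congr rfl fun i _ => ?_
          rw [Finset.mul_sum]
          exact Finset.sum_congr rfl fun j _ => by ring
  -- step1
  have step1 : (∑ u ∈ Finset.univ.filter (fun u => hammingDist u wstar = k), x u)
      = (((κ:ℝ)-1)/κ)^k * (1/(κ:ℝ))^(ℓ-k) *
          ∑ D ∈ Finset.powersetCard k Finset.univ, ∑ u, x u * P D u := by
    rw [Finset.sum_filter]
    have swap : (∑ D ∈ Finset.powersetCard k Finset.univ, ∑ u, x u * P D u)
        = ∑ u, x u * ∑ D ∈ Finset.powersetCard k Finset.univ, P D u := by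
      rw [Finset.sum_comm]
      exact Finset.sum_congr rfl fun u _ => (Finset.mul_sum _ _ _).symm
    rw [swap, Finset.mul_sum]
    refine Finset.sum_congr rfl (fun u _ => ?_)
    rw [hPsum u]
    split_ifs with h
    · have c1 : (((κ:ℝ)-1)/κ)^k * ((κ:ℝ)/((κ:ℝ)-1))^k = 1 := by
        rw [← mul_pow, div_mul_div_comm, mul_comm ((κ:ℝ)-1) (κ:ℝ), div_self (by positivity),
          one_pow]
      have c2 : (1/(κ:ℝ))^(ℓ-k) * (κ:ℝ)^(ℓ-k) = 1 := by
        rw [← mul_pow, one_div_mul_cancel hκ0', one_pow]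
      calc x u = ((((κ:ℝ)-1)/κ)^k * ((κ:ℝ)/((κ:ℝ)-1))^k) * ((1/(κ:ℝ))^(ℓ-k) * (κ:ℝ)^(ℓ-k)) * x u := by
            rw [c1, c2]; ring
        _ = (((κ:ℝ)-1)/κ)^k * (1/(κ:ℝ))^(ℓ-k) * (x u * (((κ:ℝ)/((κ:ℝ)-1))^k * (κ:ℝ)^(ℓ-k))) := by
            ring
    · simp
  rw [step1, Finset.sum_congr rfl (fun D hD => (step2 D).trans (step3 D hD)),
    Finset.sum_const, Finset.card_powersetCard, Finset.card_univ, Fintype.card_fin,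
    nsmul_eq_mul]
  have hpow : (((κ:ℝ)-1)/κ)^k * (1/(κ:ℝ))^(ℓ-k) = ((κ:ℝ)-1)^k / (κ:ℝ)^ℓ := by
    rw [div_pow, div_pow, one_pow, div_mul_div_comm, mul_one]
    congr 1
    rw [← pow_add, Nat.add_sub_cancel' hk]
  rw [hpow]
  rw [show (∑ i ∈ Finset.range (k+1), ∑ j ∈ Finset.range (ℓ-k+1),
      (k.choose i : ℝ) * ((ℓ-k).choose j : ℝ) *
        ((-1:ℝ)^i * ((κ:ℝ)-1)^j * ((lam - 1) * ρ^(i+j) / (lam - ρ^(i+j)))))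
      = (lam - 1) * ∑ i ∈ Finset.range (k+1), ∑ j ∈ Finset.range (ℓ-k+1),
      (k.choose i : ℝ) * ((ℓ-k).choose j : ℝ) *
        ((-1:ℝ)^i * ((κ:ℝ)-1)^j * ρ^(i+j) / (lam - ρ^(i+j))) from ?_]
  · ring
  · rw [Finset.mul_sum]
    refine Finset.sum_congr rfl fun i _ => ?_
    rw [Finset.mul_sum]
    exact Finset.sum_congr rfl fun j _ => by ring
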